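/- Let A be an associative algebra over ℂ(q) and let x, y ∈ A. If the quantum Serre relation S_{q,n}(x,y) = 0 holds, then S_{q,n+2}(x,y) = 0 also holds. -/

import Mathlib

noncomputable section

/-- The field ℂ(q) of rational functions. -/
abbrev Fq : Type := RatFunc ℂ

/-- The indeterminate q. -/
def qv : Fq := RatFunc.X

/-- Balanced quantum integer [m]_q = (q^m - q^{-m})/(q - q⁻¹). -/
def qInt (m : ℕ) : Fq := (qv ^ m - qv⁻¹ ^ m) / (qv - qv⁻¹)

/-- Quantum factorial. -/
def qFact : ℕ → Fq
  | 0 => 1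
  | n + 1 => qInt (n + 1) * qFact n

/-- Balanced Gaussian binomial coefficient. -/
def qBinom (n i : ℕ) : Fq := qFact n / (qFact i * qFact (n - i))

/-- The n-th quantum Serre operator S_{q,n}(x,y). -/
def Sq (A : Type*) [Ring A] [Algebra Fq A] (n : ℕ) (x y : A) : A :=
  ∑ i ∈ Finset.range (n + 1), ((-1 : Fq) ^ i * qBinom n i) • (x ^ i * y * x ^ (n - i))

lemma qv_ne_zero : qv ≠ 0 := RatFunc.X_ne_zero

lemma qv_pow_ne_one (s : ℕ) (hs : 1 ≤ s) : qv ^ s ≠ 1 := by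
  intro h
  have h2 : (algebraMap (Polynomial ℂ) (RatFunc ℂ)) (Polynomial.X ^ s) = algebraMap (Polynomial ℂ) (RatFunc ℂ) 1 := by
    simpa [map_pow, RatFunc.algebraMap_X, qv] using h
  have := RatFunc.algebraMap_injective ℂ h2
  have hd := congrArg Polynomial.natDegree this
  simp [Polynomial.natDegree_X_pow] at hd
  omega

lemma qv_pow_ne_zero (s : ℕ) : qv ^ s ≠ 0 := pow_ne_zero s qv_ne_zero

lemma qden_ne_zero : qv - qv⁻¹ ≠ 0 := by
  rw [sub_ne_zero]
  intro h
  have : qv ^ 2 = 1 := by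
    rw [pow_two]
    nth_rewrite 1 [h]
    exact inv_mul_cancel₀ qv_ne_zero
  exact qv_pow_ne_one 2 (by norm_num) this

lemma qnum_ne_zero (m : ℕ) (hm : 1 ≤ m) : qv ^ m - qv⁻¹ ^ m ≠ 0 := by
  rw [sub_ne_zero, inv_pow]
  intro h
  have : qv ^ (2 * m) = 1 := by
    rw [two_mul, pow_add]
    nth_rewrite 1 [h]
    exact inv_mul_cancel₀ (pow_ne_zero m qv_ne_zero)
  exact qv_pow_ne_one (2*m) (by omega) this

lemma qInt_ne_zero (m : ℕ) (hm : 1 ≤ m) : qInt m ≠ 0 :=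
  div_ne_zero (qnum_ne_zero m hm) qden_ne_zero

lemma qFact_ne_zero (n : ℕ) : qFact n ≠ 0 := by
  induction n with
  | zero => simp [qFact]
  | succ k ih => exact mul_ne_zero (qInt_ne_zero _ (by omega)) ih

lemma qInt_key (s : ℕ) : qInt s * (qv - qv⁻¹) = qv^s - qv⁻¹^s :=
  div_mul_cancel₀ _ qden_ne_zero

lemma qInt_main (k m : ℕ) :
    qInt (k+m+4) * qInt (k+m+3) =
      qInt (k+2) * qInt (k+1)
      + (qv^(k+m+3) + qv⁻¹^(k+m+3)) * (qInt (k+2) * qInt (m+2))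
      + qInt (m+2) * qInt (m+1) := by
  have hq : qv * qv⁻¹ = 1 := mul_inv_cancel₀ qv_ne_zero
  have hk : qv^k * qv⁻¹^k = 1 := by rw [← mul_pow, hq, one_pow]
  have hm : qv^m * qv⁻¹^m = 1 := by rw [← mul_pow, hq, one_pow]
  refine mul_right_cancel₀ (pow_ne_zero 2 qden_ne_zero) ?_
  have K1 := qInt_key (k+m+4)
  have K2 := qInt_key (k+m+3)
  have K3 := qInt_key (k+2)
  have K4 := qInt_key (k+1)
  have K5 := qInt_key (m+2)
  have K6 := qInt_key (m+1)
  linear_combination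
    (qInt (k+m+3) * (qv-qv⁻¹)) * K1
    + (qv^(k+m+4) - qv⁻¹^(k+m+4)) * K2
    - (qInt (k+1) * (qv-qv⁻¹)) * K3
    - (qv^(k+2) - qv⁻¹^(k+2)) * K4
    - (qv^(k+m+3)+qv⁻¹^(k+m+3)) * ((qInt (m+2) * (qv-qv⁻¹)) * K3 + (qv^(k+2)-qv⁻¹^(k+2)) * K5)
    - ((qInt (m+1) * (qv-qv⁻¹)) * K5 + (qv^(m+2)-qv⁻¹^(m+2)) * K6)
    + ((1) * (qv⁻¹ * qv^m * qv⁻¹^m) + (1) * (qv⁻¹ * qv^k * qv⁻¹^k) + (-2) * (qv⁻¹ * qv^k * qv⁻¹^k * qv^m * qv⁻¹^m) + (1) * (qv⁻¹^3 * (qv⁻¹^k)^2 * qv^m * qv⁻¹^m) + (1) * (qv⁻¹^3 * qv^k * qv⁻¹^k * (qv⁻¹^m)^2) + (1) * (qv * qv^m * qv⁻¹^m) + (1) * (qv * qv^k * qv⁻¹^k) + (-2) * (qv * qv^k * qv⁻¹^k * qv^m * qv⁻¹^m) + (-2) * (qv * qv⁻¹^2 * qv^k * qv⁻¹^k * qv^m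 * qv⁻¹^m) + (1) * (qv * qv⁻¹^4 * (qv⁻¹^k)^2 * qv^m * qv⁻¹^m) + (1) * (qv * qv⁻¹^4 * qv^k * qv⁻¹^k * (qv⁻¹^m)^2) + (-2) * (qv^2 * qv⁻¹ * qv^k * qv⁻¹^k * qv^m * qv⁻¹^m) + (-2) * (qv^2 * qv⁻¹^3 * qv^k * qv⁻¹^k * qv^m * qv⁻¹^m) + (1) * (qv^3 * qv^k * qv⁻¹^k * (qv^m)^2) + (1) * (qv^3 * (qv^k)^2 * qv^m * qv⁻¹^m) + (-2) * (qv^3 * qv⁻¹^2 * qv^k * qv⁻¹^k * qv^m * qv⁻¹^m) + (1) * (qv^4 * qv⁻¹ * qv^k * qv⁻¹^k * (qv^m)^2) + (1) * (qv^4 * qv⁻¹ * (qv^k)^2 * qv^m * qv⁻¹^m)) * hq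
    + ((1) * (qv⁻¹) + (-2) * (qv⁻¹ * qv^m * qv⁻¹^m) + (1) * (qv⁻¹^3 * (qv⁻¹^m)^2) + (1) * (qv) + (-2) * (qv * qv^m * qv⁻¹^m) + (1) * (qv^3 * (qv^m)^2)) * hk
    + ((-1) * (qv⁻¹) + (1) * (qv⁻¹^3 * (qv⁻¹^k)^2) + (-1) * (qv) + (1) * (qv^3 * (qv^k)^2)) * hm

lemma qInt_add_two (n : ℕ) : qInt (n+2) = qInt n + (qv^(n+1) + qv⁻¹^(n+1)) := by
  have hq : qv * qv⁻¹ = 1 := mul_inv_cancel₀ qv_ne_zero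
  refine mul_right_cancel₀ qden_ne_zero ?_
  have K1 := qInt_key (n+2)
  have K2 := qInt_key n
  linear_combination K1 - K2 + (qv^n - qv⁻¹^n) * hq

lemma qInt_zero : qInt 0 = 0 := by simp [qInt]

lemma qInt_two : qInt 2 = qv + qv⁻¹ := by
  have := qInt_add_two 0
  simpa [qInt_zero] using this

lemma qBinom_zero (n : ℕ) : qBinom n 0 = 1 := by
  simp [qBinom, qFact, div_self (qFact_ne_zero n)]

lemma qBinom_self (n : ℕ) : qBinom n n = 1 := by
  simp [qBinom, qFact, div_self (qFact_ne_zero n)]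

lemma qFact_one : qFact 1 = 1 := by
  simp [qFact, qInt]
  exact qden_ne_zero

lemma qBinom_one (n : ℕ) : qBinom (n+1) 1 = qInt (n+1) := by
  show qFact (n+1) / (qFact 1 * qFact (n+1-1)) = _
  rw [qFact_one, one_mul, Nat.add_sub_cancel]
  show qInt (n+1) * qFact n / qFact n = _
  rw [mul_div_assoc, div_self (qFact_ne_zero n), mul_one]

lemma qBinom_pred (n : ℕ) : qBinom (n+1) n = qInt (n+1) := by
  show qFact (n+1) / (qFact n * qFact (n+1-n)) = _
  rw [show n+1-n = 1 from by omega, qFact_one, mul_one]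
  show qInt (n+1) * qFact n / qFact n = _
  rw [mul_div_assoc, div_self (qFact_ne_zero n), mul_one]

lemma qBinom_mid (k m : ℕ) :
    qBinom (k+m+4) (k+2) =
      qBinom (k+m+2) k
      + (qv^(k+m+3) + qv⁻¹^(k+m+3)) * qBinom (k+m+2) (k+1)
      + qBinom (k+m+2) (k+2) := by
  have F1 : qFact (k+m+4) = qInt (k+m+4) * qInt (k+m+3) * qFact (k+m+2) := by
    show qInt (k+m+4) * qFact (k+m+3) = _
    show qInt (k+m+4) * (qInt (k+m+3) * qFact (k+m+2)) = _
    ring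
  have F2 : qFact (k+2) = qInt (k+2) * qInt (k+1) * qFact k := by
    show qInt (k+2) * (qInt (k+1) * qFact k) = _ ; ring
  have F3 : qFact (m+2) = qInt (m+2) * qInt (m+1) * qFact m := by
    show qInt (m+2) * (qInt (m+1) * qFact m) = _ ; ring
  have F4 : qFact (k+1) = qInt (k+1) * qFact k := rfl
  have F5 : qFact (m+1) = qInt (m+1) * qFact m := rfl
  have dd : qFact (k+2) * qFact (m+2) ≠ 0 :=
    mul_ne_zero (qFact_ne_zero _) (qFact_ne_zero _)
  set T : Fq := qFact (k+m+2) / (qFact (k+2) * qFact (m+2)) with hT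
  have hB : qBinom (k+m+4) (k+2) = (qInt (k+m+4) * qInt (k+m+3)) * T := by
    show qFact (k+m+4) / (qFact (k+2) * qFact (k+m+4-(k+2))) = _
    rw [show k+m+4-(k+2) = m+2 from by omega, hT, F1, mul_div_assoc]
  have hX : qBinom (k+m+2) k = (qInt (k+2) * qInt (k+1)) * T := by
    show qFact (k+m+2) / (qFact k * qFact (k+m+2-k)) = _
    rw [show k+m+2-k = m+2 from by omega, hT, mul_div_assoc']
    rw [div_eq_div_iff (mul_ne_zero (qFact_ne_zero _) (qFact_ne_zero _)) dd, F2]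
    ring
  have hY : qBinom (k+m+2) (k+1) = (qInt (k+2) * qInt (m+2)) * T := by
    show qFact (k+m+2) / (qFact (k+1) * qFact (k+m+2-(k+1))) = _
    rw [show k+m+2-(k+1) = m+1 from by omega, hT, mul_div_assoc']
    rw [div_eq_div_iff (mul_ne_zero (qFact_ne_zero _) (qFact_ne_zero _)) dd, F2, F3, F4, F5]
    ring
  have hZ : qBinom (k+m+2) (k+2) = (qInt (m+2) * qInt (m+1)) * T := by
    show qFact (k+m+2) / (qFact (k+2) * qFact (k+m+2-(k+2))) = _
    rw [show k+m+2-(k+2) = m from by omega, hT, mul_div_assoc']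
    rw [div_eq_div_iff (mul_ne_zero (qFact_ne_zero _) (qFact_ne_zero _)) dd, F3]
    ring
  rw [hB, hX, hY, hZ]
  linear_combination T * qInt_main k m

lemma coeff_id (n j : ℕ) (hj : j ≤ n + 2) :
    qBinom (n+2) j = (if 2 ≤ j then qBinom n (j-2) else 0)
      + (qv^(n+1) + qv⁻¹^(n+1)) * (if 1 ≤ j ∧ j ≤ n+1 then qBinom n (j-1) else 0)
      + (if j ≤ n then qBinom n j else 0) := by
  rcases j with _ | j
  · simp [qBinom_zero]
  rcases j with _ | j'
  · -- j = 1
    rcases n with _ | n'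
    · have h1 : qBinom 2 1 = qInt 2 := qBinom_one 1
      norm_num [h1, qInt_two, qBinom_zero]
    · have h1 : qBinom (n'+1+2) 1 = qInt (n'+1+2) := qBinom_one (n'+2)
      have h2 : qBinom (n'+1) 1 = qInt (n'+1) := qBinom_one n'
      rw [h1, show n'+1+2 = (n'+1)+2 from rfl, qInt_add_two]
      norm_num [h2, qBinom_zero]
      ring
  · -- j = j'+2
    rcases Nat.lt_or_ge (j'+2) (n+1) with hlt | hge
    · -- j'+2 ≤ n : middle
      obtain ⟨m, rfl⟩ : ∃ m, n = j' + m + 2 := ⟨n - j' - 2, by omega⟩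
      have hmid := qBinom_mid j' m
      rw [if_pos (by omega : 2 ≤ j'+1+1), if_pos (by omega : 1 ≤ j'+1+1 ∧ j'+1+1 ≤ j'+m+2+1), if_pos (by omega : j'+1+1 ≤ j'+m+2)]
      rw [show j'+m+2+2 = j'+m+4 from by omega, show j'+1+1 = j'+2 from by omega, hmid]
      norm_num [show j'+2-2 = j' from by omega, show j'+2-1 = j'+1 from by omega]
    · rcases Nat.lt_or_ge (j'+2) (n+2) with hlt2 | hge2
      · -- j = n+1, n ≥ 1
        obtain rfl : n = j'+1 := by omega
        have h1 : qBinom (j'+2+1) (j'+2) = qInt (j'+2+1) := qBinom_pred (j'+2)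
        have h2 : qBinom (j'+1) j' = qInt (j'+1) := qBinom_pred j'
        rw [if_pos (by omega : 2 ≤ j'+1+1), if_pos (by omega : 1 ≤ j'+1+1 ∧ j'+1+1 ≤ j'+1+1), if_neg (by omega : ¬ j'+1+1 ≤ j'+1)]
        rw [show j'+1+2 = j'+2+1 from by omega, show j'+1+1 = j'+2 from by omega, h1, show j'+2-2 = j' from by omega, show j'+2-1 = j'+1 from by omega, h2, qBinom_self, show j'+2+1 = (j'+1)+2 from by omega, qInt_add_two]
        ring
      · -- j = n+2
        obtain rfl : n = j' := by omega
        rw [if_pos (by omega : 2 ≤ n+1+1), if_neg (by omega : ¬(1 ≤ n+1+1 ∧ n+1+1 ≤ n+1)), if_neg (by omega : ¬ n+1+1 ≤ n)]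
        rw [show n+1+1 = n+2 from by omega, qBinom_self, show n+2-2 = n from by omega, qBinom_self]
        ring

lemma sum_shift2 {A : Type*} [AddCommMonoid A] (n : ℕ) (f : ℕ → A) :
    ∑ j ∈ Finset.range (n+3), (if 2 ≤ j then f (j-2) else 0) = ∑ i ∈ Finset.range (n+1), f i := by
  rw [Finset.sum_range_succ', Finset.sum_range_succ']
  simp

lemma sum_shift1 {A : Type*} [AddCommMonoid A] (n : ℕ) (f : ℕ → A) :
    ∑ j ∈ Finset.range (n+3), (if 1 ≤ j ∧ j ≤ n+1 then f (j-1) else 0)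
      = ∑ i ∈ Finset.range (n+1), f i := by
  rw [Finset.sum_range_succ', Finset.sum_range_succ]
  simp only [Nat.le_add_left, true_and, Nat.add_sub_cancel, add_zero, Nat.succ_le_succ_iff]
  rw [if_neg (by omega : ¬ n+1 ≤ n), if_neg (by simp : ¬(1 ≤ 0 ∧ True)), add_zero, add_zero]
  refine Finset.sum_congr rfl fun i hi => ?_
  simp only [Finset.mem_range] at hi
  rw [if_pos ⟨Nat.zero_le _, by omega⟩]

lemma sum_shift0 {A : Type*} [AddCommMonoid A] (n : ℕ) (f : ℕ → A) :
    ∑ j ∈ Finset.range (n+3), (if j ≤ n then f j else 0) = ∑ i ∈ Finset.range (n+1), f i := by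
  rw [Finset.sum_range_succ, Finset.sum_range_succ]
  simp only [if_neg (by omega : ¬ n+2 ≤ n), if_neg (by omega : ¬ n+1 ≤ n), add_zero]
  refine Finset.sum_congr rfl fun i hi => ?_
  rw [if_pos (by simp only [Finset.mem_range] at hi; omega)]

lemma Sq_rec (A : Type*) [Ring A] [Algebra Fq A] (x y : A) (n : ℕ) :
    Sq A (n+2) x y = x^2 * Sq A n x y
      - (qv^(n+1) + qv⁻¹^(n+1)) • (x * Sq A n x y * x)
      + Sq A n x y * x^2 := by
  have e1 : x^2 * Sq A n x y
      = ∑ i ∈ Finset.range (n+1), ((-1:Fq)^i * qBinom n i) • (x^(i+2) * y * x^(n-i)) := by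
    rw [Sq, Finset.mul_sum]
    refine Finset.sum_congr rfl fun i _ => ?_
    rw [mul_smul_comm]
    congr 1
    rw [show i + 2 = 2 + i from by omega, pow_add]
    simp [mul_assoc]
  have e2 : (qv^(n+1) + qv⁻¹^(n+1)) • (x * Sq A n x y * x)
      = - ∑ i ∈ Finset.range (n+1),
          (-((qv^(n+1) + qv⁻¹^(n+1)) * ((-1:Fq)^i * qBinom n i))) • (x^(i+1) * y * x^(n-i+1)) := by
    rw [Sq, Finset.mul_sum, Finset.sum_mul, Finset.smul_sum, ← Finset.sum_neg_distrib]
    refine Finset.sum_congr rfl fun i _ => ?_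
    rw [neg_smul, neg_neg, mul_smul_comm, smul_mul_assoc, smul_smul]
    congr 1
    rw [pow_succ x (n-i), pow_succ' x i]
    simp [mul_assoc]
  have e3 : Sq A n x y * x^2
      = ∑ i ∈ Finset.range (n+1), ((-1:Fq)^i * qBinom n i) • (x^i * y * x^(n-i+2)) := by
    rw [Sq, Finset.sum_mul]
    refine Finset.sum_congr rfl fun i _ => ?_
    rw [smul_mul_assoc]
    congr 1
    rw [pow_add]
    simp [mul_assoc]
  rw [Sq, show n+2+1 = n+3 from by omega]
  calc ∑ j ∈ Finset.range (n+3), ((-1:Fq)^j * qBinom (n+2) j) • (x^j * y * x^(n+2-j))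
      = ∑ j ∈ Finset.range (n+3),
          ((if 2 ≤ j then ((-1:Fq)^(j-2) * qBinom n (j-2)) • (x^((j-2)+2) * y * x^(n-(j-2))) else 0)
          + (if 1 ≤ j ∧ j ≤ n+1 then
              (-((qv^(n+1) + qv⁻¹^(n+1)) * ((-1:Fq)^(j-1) * qBinom n (j-1)))) • (x^((j-1)+1) * y * x^(n-(j-1)+1)) else 0)
          + (if j ≤ n then ((-1:Fq)^j * qBinom n j) • (x^j * y * x^(n-j+2)) else 0)) := by
        refine Finset.sum_congr rfl fun j hj => ?_
        simp only [Finset.mem_range] at hj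
        rw [coeff_id n j (by omega), mul_add, mul_add, add_smul, add_smul]
        congr 1
        · congr 1
          · -- first piece
            split_ifs with h
            · obtain ⟨i, rfl⟩ : ∃ i, j = i+2 := ⟨j-2, by omega⟩
              rw [Nat.add_sub_cancel, show n+2-(i+2) = n-i from by omega,
                pow_add ((-1:Fq)) i 2]
              norm_num
            · simp
          · -- middle piece
            split_ifs with h
            · obtain ⟨i, rfl⟩ : ∃ i, j = i+1 := ⟨j-1, by omega⟩
              rw [Nat.add_sub_cancel, show n+2-(i+1) = n-i+1 from by omega]
              congr 1
              rw [pow_succ]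
              ring
            · simp
        · -- third piece
          split_ifs with h
          · rw [show n+2-j = n-j+2 from by omega]
          · simp
    _ = (∑ j ∈ Finset.range (n+3), (if 2 ≤ j then ((-1:Fq)^(j-2) * qBinom n (j-2)) • (x^((j-2)+2) * y * x^(n-(j-2))) else 0))
        + (∑ j ∈ Finset.range (n+3), (if 1 ≤ j ∧ j ≤ n+1 then
            (-((qv^(n+1) + qv⁻¹^(n+1)) * ((-1:Fq)^(j-1) * qBinom n (j-1)))) • (x^((j-1)+1) * y * x^(n-(j-1)+1)) else 0))
        + (∑ j ∈ Finset.range (n+3), (if j ≤ n then ((-1:Fq)^j * qBinom n j) • (x^j * y * x^(n-j+2)) else 0)) := by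
        rw [Finset.sum_add_distrib, Finset.sum_add_distrib]
    _ = x^2 * Sq A n x y - (qv^(n+1) + qv⁻¹^(n+1)) • (x * Sq A n x y * x) + Sq A n x y * x^2 := by
        rw [sum_shift2 n (fun i => ((-1:Fq)^i * qBinom n i) • (x^(i+2) * y * x^(n-i))),
          sum_shift1 n (fun i => (-((qv^(n+1) + qv⁻¹^(n+1)) * ((-1:Fq)^i * qBinom n i))) • (x^(i+1) * y * x^(n-i+1))),
          sum_shift0 n (fun j => ((-1:Fq)^j * qBinom n j) • (x^j * y * x^(n-j+2)))]
        rw [e1, e3, sub_eq_add_neg, e2, neg_neg]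

theorem stmt7 (A : Type*) [Ring A] [Algebra Fq A] (x y : A) (n : ℕ)
    (h : Sq A n x y = 0) : Sq A (n + 2) x y = 0 := by
  rw [Sq_rec, h]
  simp

end
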